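/- For every finite rooted tree T, the defect Δ(T) := |T| − t(T)/s(T) satisfies Δ(T) ≥ (1/2)·log₂ s(T), where s(T) is the number of subtrees (connected induced subgraphs) of T containing the root and t(T) is the total number of vertices over all such subtrees. -/

import Mathlib

open scoped Classical

/-- The subtrees (nonempty connected induced subgraphs) of a graph, as vertex sets. -/
noncomputable def subtrees {V : Type*} [Fintype V] (G : SimpleGraph V) :
    Finset (Finset V) :=
  Finset.univ.filter (fun s => s.Nonempty ∧ (G.induce (s : Set V)).Connected)

/-- The subtrees of a graph containing a fixed vertex `r`. -/
noncomputable def subtreesThrough {V : Type*} [Fintype V] (G : SimpleGraph V) (r : V) :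
    Finset (Finset V) :=
  Finset.univ.filter (fun s => r ∈ s ∧ (G.induce (s : Set V)).Connected)

section Stmt5Aux

variable {V : Type*}

noncomputable def sIdeals (p : V → V) (B : Finset V) : Finset (Finset V) :=
  B.powerset.filter (fun S => ∀ v ∈ S, p v ∈ B → p v ∈ S)

lemma mem_sIdeals {p : V → V} {B S : Finset V} :
    S ∈ sIdeals p B ↔ S ⊆ B ∧ ∀ v ∈ S, p v ∈ B → p v ∈ S := by
  simp [sIdeals, Finset.mem_powerset]

lemma empty_mem_sIdeals (p : V → V) (B : Finset V) : ∅ ∈ sIdeals p B := by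
  simp [mem_sIdeals]

lemma sIdeals_card_pos (p : V → V) (B : Finset V) : 0 < (sIdeals p B).card :=
  Finset.card_pos.2 ⟨∅, empty_mem_sIdeals p B⟩

lemma sIdeals_empty (p : V → V) : sIdeals p (∅ : Finset V) = {∅} := by
  ext S
  simp [mem_sIdeals, Finset.subset_empty]

noncomputable def sDesc (p : V → V) (B : Finset V) (r : V) : Finset V :=
  B.filter (fun v => ∃ k, p^[k] v = r ∧ ∀ j < k, p^[j] v ∈ B)

lemma mem_sDesc {p : V → V} {B : Finset V} {r v : V} :
    v ∈ sDesc p B r ↔ v ∈ B ∧ ∃ k, p^[k] v = r ∧ ∀ j < k, p^[j] v ∈ B := by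
  simp [sDesc]

lemma self_mem_sDesc {p : V → V} {B : Finset V} {r : V} (hr : r ∈ B) : r ∈ sDesc p B r :=
  mem_sDesc.2 ⟨hr, 0, rfl, fun j hj => absurd hj (Nat.not_lt_zero j)⟩

lemma sDesc_subset (p : V → V) (B : Finset V) (r : V) : sDesc p B r ⊆ B :=
  Finset.filter_subset _ _

lemma mem_sDesc_of_parent {p : V → V} {B : Finset V} {r v : V} (hv : v ∈ B)
    (hp : p v ∈ sDesc p B r) : v ∈ sDesc p B r := by
  obtain ⟨hpB, k, hk, hchain⟩ := mem_sDesc.1 hp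
  refine mem_sDesc.2 ⟨hv, k + 1, ?_, ?_⟩
  · rw [Function.iterate_succ_apply]; exact hk
  · intro j hj
    match j with
    | 0 => exact hv
    | j + 1 =>
      rw [Function.iterate_succ_apply]
      exact hchain j (by omega)

lemma parent_mem_sDesc {p : V → V} {B : Finset V} {r v : V} (hr : r ∈ B)
    (hv : v ∈ sDesc p B r) (hne : v ≠ r) : p v ∈ sDesc p B r := by
  obtain ⟨hvB, k, hk, hchain⟩ := mem_sDesc.1 hv
  match k with
  | 0 => exact absurd hk hne
  | k + 1 =>
    rw [Function.iterate_succ_apply] at hk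
    have hpB : p v ∈ B := by
      match k with
      | 0 => rw [Function.iterate_zero_apply] at hk; rw [hk]; exact hr
      | k + 1 => simpa [Function.iterate_succ_apply] using hchain 1 (by omega)
    refine mem_sDesc.2 ⟨hpB, k, hk, fun j hj => ?_⟩
    have := hchain (j + 1) (by omega)
    rwa [Function.iterate_succ_apply] at this

lemma root_mem_of_ideal {p : V → V} {B S : Finset V} {r : V} (hr : r ∈ B)
    (hS : S ∈ sIdeals p B) {v : V} (hv : v ∈ S) (hvd : v ∈ sDesc p B r) : r ∈ S := by
  obtain ⟨hSB, hcl⟩ := mem_sIdeals.1 hS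
  obtain ⟨hvB, k, hk, hchain⟩ := mem_sDesc.1 hvd
  clear hvd
  induction k generalizing v with
  | zero => rwa [← hk]
  | succ k ih =>
    rw [Function.iterate_succ_apply] at hk
    have hpB : p v ∈ B := by
      match k with
      | 0 => rw [Function.iterate_zero_apply] at hk; rw [hk]; exact hr
      | k + 1 => simpa [Function.iterate_succ_apply] using hchain 1 (by omega)
    refine ih (hcl v hv hpB) hpB hk (fun j hj => ?_)
    have := hchain (j + 1) (by omega)
    rwa [Function.iterate_succ_apply] at this

section Split

variable {p : V → V} {B : Finset V} {r : V}

lemma split_part1 (hS : S ∈ sIdeals p B) :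
    S \ sDesc p B r ∈ sIdeals p (B \ sDesc p B r) := by
  obtain ⟨hSB, hcl⟩ := mem_sIdeals.1 hS
  refine mem_sIdeals.2 ⟨Finset.sdiff_subset_sdiff hSB (le_refl _), ?_⟩
  intro v hv hpv
  rw [Finset.mem_sdiff] at hv hpv ⊢
  exact ⟨hcl v hv.1 hpv.1, hpv.2⟩

lemma split_part2 (hr : r ∈ B) (hS : S ∈ sIdeals p B) (hrS : r ∈ S) :
    (S ∩ sDesc p B r).erase r ∈ sIdeals p ((sDesc p B r).erase r) := by
  obtain ⟨hSB, hcl⟩ := mem_sIdeals.1 hS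
  refine mem_sIdeals.2 ⟨Finset.erase_subset_erase r Finset.inter_subset_right, ?_⟩
  intro v hv hpv
  rw [Finset.mem_erase, Finset.mem_inter] at hv
  rw [Finset.mem_erase] at hpv ⊢
  have hpT : p v ∈ sDesc p B r := hpv.2
  have hpS : p v ∈ S := hcl v hv.2.1 (sDesc_subset p B r hpT)
  exact ⟨hpv.1, Finset.mem_inter.2 ⟨hpS, hpT⟩⟩

lemma split_part2' (hr : r ∈ B) (hS : S ∈ sIdeals p B) (hrS : r ∈ S) :
    S ∩ sDesc p B r = insert r ((S ∩ sDesc p B r).erase r) :=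
  (Finset.insert_erase (Finset.mem_inter.2 ⟨hrS, self_mem_sDesc hr⟩)).symm

lemma split_part2'' (hr : r ∈ B) (hS : S ∈ sIdeals p B) (hrS : r ∉ S) :
    S ∩ sDesc p B r = ∅ := by
  rw [Finset.eq_empty_iff_forall_notMem]
  intro v hv
  rw [Finset.mem_inter] at hv
  exact hrS (root_mem_of_ideal hr hS hv.1 hv.2)

lemma split_j (hr : r ∈ B) (hroot : p r ∉ B)
    {S1 S2 : Finset V} (h1 : S1 ∈ sIdeals p (B \ sDesc p B r))
    (h2 : S2 ∈ insert ∅ ((sIdeals p ((sDesc p B r).erase r)).image (insert r))) :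
    S1 ∪ S2 ∈ sIdeals p B := by
  obtain ⟨h1B, h1cl⟩ := mem_sIdeals.1 h1
  have hS1 : ∀ v ∈ S1, p v ∈ B → p v ∈ S1 := by
    intro v hv hpv
    have hvB : v ∈ B \ sDesc p B r := h1B hv
    rw [Finset.mem_sdiff] at hvB
    have hpT : p v ∉ sDesc p B r := fun hpT => hvB.2 (mem_sDesc_of_parent hvB.1 hpT)
    exact h1cl v hv (Finset.mem_sdiff.2 ⟨hpv, hpT⟩)
  rw [Finset.mem_insert] at h2
  rcases h2 with rfl | h2
  · rw [Finset.union_empty]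
    exact mem_sIdeals.2 ⟨h1B.trans (Finset.sdiff_subset), hS1⟩
  · obtain ⟨S2', h2', rfl⟩ := Finset.mem_image.1 h2
    obtain ⟨h2B, h2cl⟩ := mem_sIdeals.1 h2'
    have hS2T : insert r S2' ⊆ sDesc p B r :=
      Finset.insert_subset (self_mem_sDesc hr)
        (h2B.trans (Finset.erase_subset _ _))
    refine mem_sIdeals.2 ⟨Finset.union_subset (h1B.trans (Finset.sdiff_subset))
      (hS2T.trans (sDesc_subset p B r)), ?_⟩
    intro v hv hpv
    rw [Finset.mem_union] at hv ⊢
    rcases hv with hv | hv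
    · exact Or.inl (hS1 v hv hpv)
    · rw [Finset.mem_insert] at hv
      rcases hv with rfl | hv
      · exact absurd hpv hroot
      · have hvT : v ∈ (sDesc p B r).erase r := h2B hv
        rw [Finset.mem_erase] at hvT
        have hpT : p v ∈ sDesc p B r := parent_mem_sDesc hr hvT.2 hvT.1
        right
        by_cases hpr : p v = r
        · rw [hpr]; exact Finset.mem_insert_self r S2'
        · exact Finset.mem_insert_of_mem
            (h2cl v hv (Finset.mem_erase.2 ⟨hpr, hpT⟩))

lemma split_D_subset {S2 : Finset V}
    (h2 : S2 ∈ insert ∅ ((sIdeals p ((sDesc p B r).erase r)).image (insert r)))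
    (hr : r ∈ B) : S2 ⊆ sDesc p B r := by
  rw [Finset.mem_insert] at h2
  rcases h2 with rfl | h2
  · exact Finset.empty_subset _
  · obtain ⟨S2', h2', rfl⟩ := Finset.mem_image.1 h2
    exact Finset.insert_subset (self_mem_sDesc hr)
      ((mem_sIdeals.1 h2').1.trans (Finset.erase_subset _ _))

end Split

section Counts

variable {p : V → V} {B : Finset V} {r : V}

lemma split_sum_general (hr : r ∈ B) (hroot : p r ∉ B) (f : Finset V → ℝ) :
    (∑ S ∈ sIdeals p B, f S) =
      ∑ P ∈ (sIdeals p (B \ sDesc p B r)) ×ˢ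
        (insert ∅ ((sIdeals p ((sDesc p B r).erase r)).image (insert r))),
        f (P.1 ∪ P.2) := by
  refine Finset.sum_bij' (fun S _ => (S \ sDesc p B r, S ∩ sDesc p B r))
    (fun P _ => P.1 ∪ P.2) ?_ ?_ ?_ ?_ ?_
  · intro S hS
    rw [Finset.mem_product]
    refine ⟨split_part1 hS, ?_⟩
    by_cases hrS : r ∈ S
    · rw [Finset.mem_insert]
      right
      rw [Finset.mem_image]
      exact ⟨(S ∩ sDesc p B r).erase r, split_part2 hr hS hrS,
        (split_part2' hr hS hrS).symm⟩
    · rw [split_part2'' hr hS hrS]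
      exact Finset.mem_insert_self _ _
  · intro P hP
    rw [Finset.mem_product] at hP
    exact split_j hr hroot hP.1 hP.2
  · intro S hS
    simp only
    ext x
    simp only [Finset.mem_union, Finset.mem_sdiff, Finset.mem_inter]
    tauto
  · intro P hP
    rw [Finset.mem_product] at hP
    have h1B : P.1 ⊆ B \ sDesc p B r := (mem_sIdeals.1 hP.1).1
    have h2T : P.2 ⊆ sDesc p B r := split_D_subset hP.2 hr
    have h1T : ∀ x ∈ P.1, x ∉ sDesc p B r := by
      intro x hx
      exact (Finset.mem_sdiff.1 (h1B hx)).2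
    have e1 : (P.1 ∪ P.2) \ sDesc p B r = P.1 := by
      ext x
      simp only [Finset.mem_sdiff, Finset.mem_union]
      constructor
      · rintro ⟨hx | hx, hxT⟩
        · exact hx
        · exact absurd (h2T hx) hxT
      · intro hx
        exact ⟨Or.inl hx, h1T x hx⟩
    have e2 : (P.1 ∪ P.2) ∩ sDesc p B r = P.2 := by
      ext x
      simp only [Finset.mem_inter, Finset.mem_union]
      constructor
      · rintro ⟨hx | hx, hxT⟩
        · exact absurd hxT (h1T x hx)
        · exact hx
      · intro hx
        exact ⟨Or.inr hx, h2T hx⟩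
    exact Prod.ext e1 e2
  · intro S hS
    congr 1
    ext x
    simp only [Finset.mem_union, Finset.mem_sdiff, Finset.mem_inter]
    tauto

lemma D_not_mem : (∅ : Finset V) ∉ (sIdeals p ((sDesc p B r).erase r)).image (insert r) := by
  rw [Finset.mem_image]
  rintro ⟨S', _, h⟩
  exact Finset.insert_ne_empty r S' h

lemma D_injOn : ∀ x ∈ sIdeals p ((sDesc p B r).erase r),
    ∀ y ∈ sIdeals p ((sDesc p B r).erase r), insert r x = insert r y → x = y := by
  intro x hx y hy hxy
  have hrx : r ∉ x := fun h => absurd (Finset.mem_erase.1 ((mem_sIdeals.1 hx).1 h)).1 (by simp)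
  have hry : r ∉ y := fun h => absurd (Finset.mem_erase.1 ((mem_sIdeals.1 hy).1 h)).1 (by simp)
  rw [← Finset.erase_insert hrx, ← Finset.erase_insert hry, hxy]

lemma D_card : (insert ∅ ((sIdeals p ((sDesc p B r).erase r)).image (insert r))).card
    = 1 + (sIdeals p ((sDesc p B r).erase r)).card := by
  rw [Finset.card_insert_of_notMem D_not_mem, Finset.card_image_of_injOn D_injOn, add_comm]

lemma D_sum : (∑ S ∈ insert ∅ ((sIdeals p ((sDesc p B r).erase r)).image (insert r)),
      (S.card : ℝ))
    = (∑ S ∈ sIdeals p ((sDesc p B r).erase r), (S.card : ℝ))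
      + (sIdeals p ((sDesc p B r).erase r)).card := by
  rw [Finset.sum_insert D_not_mem, Finset.sum_image D_injOn]
  have hc : ∀ S' ∈ sIdeals p ((sDesc p B r).erase r),
      (((insert r S').card : ℝ)) = (S'.card : ℝ) + 1 := by
    intro S' hS'
    have hrS' : r ∉ S' := fun h =>
      absurd (Finset.mem_erase.1 ((mem_sIdeals.1 hS').1 h)).1 (by simp)
    rw [Finset.card_insert_of_notMem hrS']
    push_cast
    ring
  rw [Finset.sum_congr rfl hc, Finset.sum_add_distrib, Finset.sum_const, Finset.card_empty]
  push_cast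
  simp [nsmul_eq_mul]

end Counts

lemma mul_log_le {t : ℝ} (h0 : 0 ≤ t) (h1 : t ≤ 1) :
    (1 + t) * Real.log (1 + t) ≤ t * (2 * Real.log 2) := by
  have c := Real.strictConvexOn_mul_log.convexOn
  have h := c.2 (Set.mem_Ici.2 (by norm_num : (0:ℝ) ≤ 1)) (Set.mem_Ici.2 (by norm_num : (0:ℝ) ≤ 2))
    (by linarith : 0 ≤ 1 - t) h0 (by ring)
  simp only [smul_eq_mul] at h
  have h1t : (1 - t) * 1 + t * 2 = 1 + t := by ring
  rw [h1t] at h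
  simp only [Real.log_one] at h
  linarith

lemma key_ineq {b : ℝ} (hb : 1 ≤ b) :
    Real.logb 2 (1 + b) ≤ Real.logb 2 b + 2 / (1 + b) := by
  have hb0 : 0 < b := by linarith
  have hb1 : 0 < 1 + b := by linarith
  have ht0 : 0 ≤ 1 / b := by positivity
  have ht1 : 1 / b ≤ 1 := by rw [div_le_one hb0]; linarith
  have key := mul_log_le ht0 ht1
  set L := Real.log (1 + 1/b) with hL
  have key' : (1 + b) * L ≤ 2 * Real.log 2 := by
    have h := mul_le_mul_of_nonneg_left key hb0.le
    have e : b * (1 + 1/b) = 1 + b := by field_simp; ring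
    calc (1 + b) * L = b * (1 + 1/b) * L := by rw [e]
      _ = b * ((1 + 1/b) * L) := by ring
      _ ≤ b * (1/b * (2 * Real.log 2)) := h
      _ = 2 * Real.log 2 := by field_simp
  have h2 : L ≤ 2 * Real.log 2 / (1 + b) := by
    rw [le_div_iff₀ hb1]; linarith
  have hsplit : Real.logb 2 (1 + b) - Real.logb 2 b = Real.logb 2 ((1+b)/b) := by
    rw [Real.logb_div (by positivity) (by positivity)]
  have h3 : (1+b)/b = 1 + 1/b := by field_simp; ring
  have hlog2 : (0:ℝ) < Real.log 2 := Real.log_pos (by norm_num)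
  have h4 : Real.logb 2 ((1+b)/b) ≤ 2 / (1 + b) := by
    rw [h3, Real.logb, div_le_iff₀ hlog2]
    calc L ≤ 2 * Real.log 2 / (1 + b) := h2
      _ = 2 / (1 + b) * Real.log 2 := by ring
  linarith

lemma forest_base (p : V → V) :
    (1/2) * Real.logb 2 ((sIdeals p (∅ : Finset V)).card) ≤
      (((∅ : Finset V).card : ℕ) : ℝ)
        - (∑ S ∈ sIdeals p (∅ : Finset V), (S.card : ℝ)) / (sIdeals p (∅ : Finset V)).card := by
  rw [sIdeals_empty]
  simp

set_option maxHeartbeats 1000000 in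
lemma forest_main (p : V → V) (h : V → ℕ) :
    ∀ (n : ℕ) (B : Finset V), B.card ≤ n →
      (∀ v ∈ B, p v ∈ B → h (p v) < h v) →
      (1/2) * Real.logb 2 ((sIdeals p B).card) ≤
        (B.card : ℝ) - (∑ S ∈ sIdeals p B, (S.card : ℝ)) / (sIdeals p B).card := by
  intro n
  induction n with
  | zero =>
    intro B hcard _
    rw [Finset.card_eq_zero.1 (Nat.le_zero.1 hcard)]
    exact forest_base p
  | succ n ih =>
    intro B hcard hforest
    rcases Finset.eq_empty_or_nonempty B with rfl | hne
    · exact forest_base p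
    obtain ⟨r, hrB, hrmin⟩ := Finset.exists_min_image B h hne
    have hroot : p r ∉ B := fun hpB => absurd (hforest r hrB hpB) (not_lt.2 (hrmin _ hpB))
    set T := sDesc p B r with hT
    set B1 := B \ T with hB1
    set B2 := T.erase r with hB2
    have hrT : r ∈ T := self_mem_sDesc hrB
    have hTB : T ⊆ B := sDesc_subset p B r
    have hB1lt : B1.card < B.card :=
      Finset.card_lt_card ((Finset.ssubset_iff_of_subset Finset.sdiff_subset).2
        ⟨r, hrB, by simp [hB1, hrT]⟩)
    have hBpos : 0 < B.card := Finset.card_pos.2 hne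
    have hB2le : B2.card ≤ B.card - 1 := by
      calc B2.card ≤ (B.erase r).card :=
            Finset.card_le_card (Finset.erase_subset_erase r hTB)
        _ = B.card - 1 := Finset.card_erase_of_mem hrB
    have IH1 := ih B1 (by omega) (fun v hv hpv =>
      hforest v (Finset.sdiff_subset hv) (Finset.sdiff_subset hpv))
    have IH2 := ih B2 (by omega) (fun v hv hpv =>
      hforest v (hTB (Finset.erase_subset r T hv)) (hTB (Finset.erase_subset r T hpv)))
    -- counting
    have hcount1 := split_sum_general hrB hroot (fun _ => (1:ℝ))
    have hcount2 := split_sum_general hrB hroot (fun S => (S.card : ℝ))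
    set D := insert ∅ ((sIdeals p B2).image (insert r)) with hD
    set a := ((sIdeals p B1).card : ℝ) with haa
    set b := ((sIdeals p B2).card : ℝ) with hbb
    set m1 := ∑ S ∈ sIdeals p B1, (S.card : ℝ) with hm1
    set m2 := ∑ S ∈ sIdeals p B2, (S.card : ℝ) with hm2
    have hDcard : (D.card : ℝ) = 1 + b := by
      rw [hD, D_card]; push_cast; ring
    have hDsum : (∑ S ∈ D, (S.card : ℝ)) = m2 + b := D_sum
    have hN : ((sIdeals p B).card : ℝ) = a * (1 + b) := by
      rw [Finset.sum_const, Finset.sum_const, nsmul_eq_mul, nsmul_eq_mul,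
        mul_one, mul_one, Finset.card_product] at hcount1
      push_cast at hcount1
      rw [hcount1, hDcard]
    have hM : (∑ S ∈ sIdeals p B, (S.card : ℝ)) = (1 + b) * m1 + a * (m2 + b) := by
      rw [hcount2]
      have hdisj : ∀ P ∈ (sIdeals p B1) ×ˢ D, (((P.1 ∪ P.2).card : ℕ) : ℝ)
          = (P.1.card : ℝ) + (P.2.card : ℝ) := by
        intro P hP
        rw [Finset.mem_product] at hP
        have h1B : P.1 ⊆ B1 := (mem_sIdeals.1 hP.1).1
        have h2T : P.2 ⊆ T := split_D_subset hP.2 hrB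
        have : Disjoint P.1 P.2 := by
          rw [Finset.disjoint_left]
          intro x hx hx2
          exact (Finset.mem_sdiff.1 (h1B hx)).2 (h2T hx2)
        rw [Finset.card_union_of_disjoint this]
        push_cast
        ring
      rw [Finset.sum_congr rfl hdisj, Finset.sum_product]
      simp only [Finset.sum_add_distrib, Finset.sum_const, nsmul_eq_mul]
      rw [hDsum, ← Finset.mul_sum, ← hm1, hDcard, ← haa]
    -- cardinalities of vertex sets
    have hncard : (B.card : ℝ) = (B1.card : ℝ) + (B2.card : ℝ) + 1 := by
      have e1 : B1.card + T.card = B.card := Finset.card_sdiff_add_card_eq_card hTB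
      have e2 : B2.card + 1 = T.card := by
        rw [hB2]; exact Finset.card_erase_add_one hrT
      push_cast [← e1, ← e2]
      ring
    have ha1 : 1 ≤ a := by
      rw [haa]; exact_mod_cast sIdeals_card_pos p B1
    have hb1 : 1 ≤ b := by
      rw [hbb]; exact_mod_cast sIdeals_card_pos p B2
    have ha0 : 0 < a := by linarith
    have hb0 : 0 < b := by linarith
    have h1b0 : 0 < 1 + b := by linarith
    have hm2nn : 0 ≤ m2 := Finset.sum_nonneg (fun S _ => by positivity)
    rw [hN, hM, hncard]
    have hlogmul : Real.logb 2 (a * (1 + b)) = Real.logb 2 a + Real.logb 2 (1 + b) :=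
      Real.logb_mul (by positivity) (by positivity)
    have hdivsplit : ((1 + b) * m1 + a * (m2 + b)) / (a * (1 + b))
        = m1 / a + (m2 + b) / (1 + b) := by
      field_simp
    rw [hlogmul, hdivsplit]
    have hkey := key_ineq hb1
    have hmono : m2 / (1 + b) ≤ m2 / b := by
      apply div_le_div_of_nonneg_left hm2nn hb0
      linarith
    have hbsplit : b / (1 + b) + 1 / (1 + b) = 1 := by field_simp; ring
    have haddd : (m2 + b) / (1 + b) = m2 / (1 + b) + b / (1 + b) := add_div m2 b (1 + b)
    have h2div : 2 / (1 + b) = 2 * (1 / (1 + b)) := (mul_one_div 2 (1 + b)).symm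
    linarith only [IH1, IH2, hkey, hmono, hbsplit, haddd, h2div]

end Stmt5Aux

/-- For every finite rooted tree `T`, the defect `Δ(T) = |T| − t(T)/s(T)` satisfies
`Δ(T) ≥ (1/2)·log₂ s(T)`, where `s(T)` is the number of subtrees containing the root
and `t(T)` their total order. -/
theorem stmt5 {V : Type*} [Fintype V] (G : SimpleGraph V) (hG : G.IsTree) (r : V) :
    (1 / 2) * Real.logb 2 ((subtreesThrough G r).card) ≤
      (Fintype.card V : ℝ) -
        (∑ s ∈ subtreesThrough G r, (s.card : ℝ)) / (subtreesThrough G r).card := by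
  classical
  have hpath : ∀ v : V, ∃! q : G.Walk v r, q.IsPath := fun v => hG.existsUnique_path v r
  set P : (v : V) → G.Walk v r := fun v => (hpath v).choose with hPdef
  have hP : ∀ v, (P v).IsPath := fun v => (hpath v).choose_spec.1
  have hPu : ∀ (v : V) (q : G.Walk v r), q.IsPath → q = P v :=
    fun v q hq => (hpath v).choose_spec.2 q hq
  set p : V → V := fun v => if v = r then r else (P v).getVert 1 with hpdef
  set h : V → ℕ := fun v => (P v).length with hhdef
  have hnotnil : ∀ v : V, v ≠ r → ¬(P v).Nil := by
    intro v hvr hnil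
    rw [SimpleGraph.Walk.nil_iff_length_eq] at hnil
    exact hvr (SimpleGraph.Walk.eq_of_length_eq_zero hnil)
  have hpv : ∀ v : V, v ≠ r → p v = (P v).getVert 1 := by
    intro v hvr; simp only [hpdef, if_neg hvr]
  have hadj : ∀ v : V, v ≠ r → G.Adj v (p v) := by
    intro v hvr
    rw [hpv v hvr]
    exact SimpleGraph.Walk.adj_snd (hnotnil v hvr)
  have htail : ∀ v : V, (hvr : v ≠ r) → (P v).tail = P ((P v).getVert 1) :=
    fun v hvr => hPu _ _ ((hP v).tail)
  have hdec : ∀ v : V, v ≠ r → h (p v) + 1 = h v := by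
    intro v hvr
    have e := SimpleGraph.Walk.length_tail_add_one (hnotnil v hvr)
    rw [htail v hvr] at e
    rw [hpv v hvr]
    exact e
  have hsupp : ∀ v : V, v ≠ r → p v ∈ (P v).support := by
    intro v hvr
    have hsup : (P v).support = v :: (P v).tail.support := by
      conv_lhs => rw [← SimpleGraph.Walk.cons_tail_eq (P v) (hnotnil v hvr)]
      rw [SimpleGraph.Walk.support_cons]
    rw [hsup, hpv v hvr, htail v hvr]
    exact List.mem_cons_of_mem _ (SimpleGraph.Walk.start_mem_support _)
  -- connected implies parent-closed
  have hclosure : ∀ S : Finset V, r ∈ S → (G.induce (S : Set V)).Connected →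
      ∀ v ∈ S, v ≠ r → p v ∈ S := by
    intro S hrS hconn v hvS hvr
    obtain ⟨W⟩ := hconn.preconnected ⟨v, hvS⟩ ⟨r, hrS⟩
    set W' : G.Walk v r :=
      (W.map (SimpleGraph.Embedding.induce (S : Set V)).toHom).copy rfl rfl with hW'
    have hWsupp : ∀ x ∈ W'.support, x ∈ S := by
      intro x hx
      change x ∈ (W.map (SimpleGraph.Embedding.induce (S : Set V)).toHom).support at hx
      rw [SimpleGraph.Walk.support_map] at hx
      obtain ⟨y, _, rfl⟩ := List.mem_map.1 hx
      exact y.2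
    have hp' : (W'.toPath : G.Walk v r) = P v := hPu v _ W'.toPath.2
    have hmem : p v ∈ (W'.toPath : G.Walk v r).support := by
      rw [hp']; exact hsupp v hvr
    exact hWsupp _ (SimpleGraph.Walk.support_toPath_subset W' hmem)
  -- parent-closed implies connected
  have hconn_of : ∀ S : Finset V, r ∈ S → (∀ v ∈ S, v ≠ r → p v ∈ S) →
      (G.induce (S : Set V)).Connected := by
    intro S hrS hcl
    have hreach : ∀ (k : ℕ) (v : V) (hv : v ∈ S), h v ≤ k →
        (G.induce (S : Set V)).Reachable ⟨v, hv⟩ ⟨r, hrS⟩ := by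
      intro k
      induction k with
      | zero =>
        intro v hv hle
        have h0 : (P v).length = 0 := Nat.le_zero.1 hle
        have hvr : v = r := SimpleGraph.Walk.eq_of_length_eq_zero h0
        subst hvr
        exact SimpleGraph.Reachable.refl _
      | succ k ih =>
        intro v hv hle
        by_cases hvr : v = r
        · subst hvr
          exact SimpleGraph.Reachable.refl _
        · have hpS : p v ∈ S := hcl v hv hvr
          have hadj' : (G.induce (S : Set V)).Adj ⟨v, hv⟩ ⟨p v, hpS⟩ := hadj v hvr
          have hlt : h (p v) ≤ k := by have := hdec v hvr; omega
          exact hadj'.reachable.trans (ih (p v) hpS hlt)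
    rw [SimpleGraph.connected_iff]
    refine ⟨fun x y => ?_, ⟨⟨r, hrS⟩⟩⟩
    obtain ⟨x, hxS⟩ := x
    obtain ⟨y, hyS⟩ := y
    exact (hreach (h x) x hxS le_rfl).trans (hreach (h y) y hyS le_rfl).symm
  -- the ambient forest
  set B : Finset V := Finset.univ.erase r with hB
  have hmemchar : ∀ S : Finset V,
      S ∈ subtreesThrough G r ↔ r ∈ S ∧ S.erase r ∈ sIdeals p B := by
    intro S
    rw [subtreesThrough, Finset.mem_filter]
    constructor
    · rintro ⟨-, hrS, hconn⟩
      refine ⟨hrS, mem_sIdeals.2 ⟨Finset.erase_subset_erase r (Finset.subset_univ S), ?_⟩⟩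
      intro v hv hpvB
      rw [Finset.mem_erase] at hv hpvB ⊢
      exact ⟨hpvB.1, hclosure S hrS hconn v hv.2 hv.1⟩
    · rintro ⟨hrS, hid⟩
      obtain ⟨hsub, hcl⟩ := mem_sIdeals.1 hid
      refine ⟨Finset.mem_univ S, hrS, hconn_of S hrS ?_⟩
      intro v hv hvr
      by_cases hpr : p v = r
      · rw [hpr]; exact hrS
      · have : p v ∈ S.erase r :=
          hcl v (Finset.mem_erase.2 ⟨hvr, hv⟩)
            (Finset.mem_erase.2 ⟨hpr, Finset.mem_univ _⟩)
        exact (Finset.mem_erase.1 this).2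
  have hrnotmem : ∀ S' ∈ sIdeals p B, r ∉ S' := by
    intro S' hS' hmem
    have := (mem_sIdeals.1 hS').1 hmem
    rw [hB, Finset.mem_erase] at this
    exact this.1 rfl
  have hi : ∀ S ∈ subtreesThrough G r, S.erase r ∈ sIdeals p B :=
    fun S hS => ((hmemchar S).1 hS).2
  have hj : ∀ S' ∈ sIdeals p B, insert r S' ∈ subtreesThrough G r := by
    intro S' hS'
    refine (hmemchar _).2 ⟨Finset.mem_insert_self r S', ?_⟩
    rw [Finset.erase_insert (hrnotmem S' hS')]
    exact hS'
  have hli : ∀ S ∈ subtreesThrough G r, insert r (S.erase r) = S := by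
    intro S hS
    exact Finset.insert_erase ((hmemchar S).1 hS).1
  have hri : ∀ S' ∈ sIdeals p B, (insert r S').erase r = S' :=
    fun S' hS' => Finset.erase_insert (hrnotmem S' hS')
  have hcardeq : (subtreesThrough G r).card = (sIdeals p B).card :=
    Finset.card_bij' (fun S _ => S.erase r) (fun S' _ => insert r S') hi hj hli hri
  have hsumeq : (∑ s ∈ subtreesThrough G r, (s.card : ℝ))
      = (∑ S' ∈ sIdeals p B, (S'.card : ℝ)) + (sIdeals p B).card := by
    rw [Finset.sum_bij' (fun S _ => S.erase r) (fun S' _ => insert r S') hi hj hli hri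
      (g := fun S' => (S'.card : ℝ) + 1)]
    · rw [Finset.sum_add_distrib, Finset.sum_const, nsmul_eq_mul, mul_one]
    · intro S hS
      have h1 : (S.erase r).card + 1 = S.card :=
        Finset.card_erase_add_one ((hmemchar S).1 hS).1
      push_cast [← h1]
      ring
  have hforest : ∀ v ∈ B, p v ∈ B → h (p v) < h v := by
    intro v hv _
    rw [hB, Finset.mem_erase] at hv
    have := hdec v hv.1
    omega
  have main := forest_main p h B.card B le_rfl hforest
  have hNpos : (0 : ℝ) < ((sIdeals p B).card : ℝ) := by
    exact_mod_cast sIdeals_card_pos p B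
  have hcardV : (Fintype.card V : ℝ) = (B.card : ℝ) + 1 := by
    have : B.card + 1 = Fintype.card V := by
      rw [hB, Finset.card_erase_of_mem (Finset.mem_univ r), Finset.card_univ]
      have : 0 < Fintype.card V := Fintype.card_pos_iff.2 ⟨r⟩
      omega
    push_cast [← this]
    ring
  rw [hcardeq, hsumeq, hcardV]
  have hdivsplit : ((∑ S' ∈ sIdeals p B, (S'.card : ℝ)) + (sIdeals p B).card)
      / ((sIdeals p B).card : ℝ)
      = (∑ S' ∈ sIdeals p B, (S'.card : ℝ)) / ((sIdeals p B).card : ℝ) + 1 := by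
    rw [add_div, div_self hNpos.ne']
  rw [hdivsplit]
  linarith only [main]
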